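/- Let T be a domain and A a T-algebra that is torsion-free as a T-module and integral over T. Then A ⊗_T Frac(T) is canonically isomorphic to the total quotient ring Q(A) of A (the localization of A at its set of non-zero-divisors). -/

import Mathlib

open scoped TensorProduct

open nonZeroDivisors

attribute [local instance] Algebra.TensorProduct.rightAlgebra

/-- In a commutative algebra, finite over a field, every non-zero-divisor is a unit. -/
lemma isUnit_of_isIntegral_of_mem_nonZeroDivisors' {F B : Type*} [Field F] [CommRing B]
    [Algebra F B] {x : B} (hx : IsIntegral F x) (h : x ∈ B⁰) : IsUnit x := by
  have : FiniteDimensional F (Algebra.adjoin F ({x} : Set B)) :=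
    ⟨(Submodule.fg_top _).mpr hx.fg_adjoin_singleton⟩
  set S := Algebra.adjoin F ({x} : Set B) with hS
  let y : S := ⟨x, Algebra.subset_adjoin rfl⟩
  let f : S →ₗ[F] S := LinearMap.mulLeft F y
  have hf : Function.Injective f := by
    rw [injective_iff_map_eq_zero]
    intro z hz
    have hz' : x * (z : B) = 0 := congrArg Subtype.val hz
    exact Subtype.ext (h.2 z.1 (by rwa [mul_comm] at hz'))
  have hs : Function.Surjective f := (LinearMap.injective_iff_surjective).mp hf
  obtain ⟨z, hz⟩ := hs 1
  have hz1 : x * (z : B) = 1 := by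
    have := congrArg Subtype.val hz
    simpa [f, y, LinearMap.mulLeft_apply] using this
  exact IsUnit.of_mul_eq_one z.1 hz1

/-- Let `T` be a domain and `A` a `T`-algebra that is torsion-free as a `T`-module and
integral over `T`.  Then `A ⊗_T Frac(T)` is canonically the total quotient ring of `A`,
i.e. the localization of `A` at its submonoid of non-zero-divisors. -/
theorem tensor_fractionRing_isTotalQuotientRing (T A : Type*) [CommRing T] [IsDomain T]
    [CommRing A] [Algebra T A] [NoZeroSMulDivisors T A] [Algebra.IsIntegral T A] :
    IsLocalization (nonZeroDivisors A) (A ⊗[T] FractionRing T) := by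
  set F := FractionRing T
  set B := A ⊗[T] F with hB
  -- `B` is the localization of `A` at the image of `T⁰`.
  haveI h1 : IsLocalization (Algebra.algebraMapSubmonoid A T⁰) B := by
    rw [← isLocalizedModule_iff_isLocalization,
      isLocalizedModule_iff_isBaseChange (S := T⁰) (A := F)]
    exact Algebra.IsPushout.out
  -- the image of `T⁰` consists of non-zero-divisors of `A`
  have hle : Algebra.algebraMapSubmonoid A T⁰ ≤ A⁰ := by
    rintro _ ⟨t, ht, rfl⟩
    rw [mem_nonZeroDivisors_iff_right]
    intro a ha
    have : t • a = 0 := by rw [Algebra.smul_def, mul_comm]; exact ha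
    rcases smul_eq_zero.mp this with h | h
    · exact absurd h (nonZeroDivisors.ne_zero ht)
    · exact h
  -- `B` is integral over `F`
  refine IsLocalization.of_le (Algebra.algebraMapSubmonoid A T⁰) A⁰ hle fun a ha => ?_
  -- the image of `a` in `B` is a non-zero-divisor
  have hmem : algebraMap A B a ∈ B⁰ :=
    IsLocalization.map_nonZeroDivisors_le (Algebra.algebraMapSubmonoid A T⁰) B ⟨a, ha, rfl⟩
  -- it is integral over the field `F`, hence a unit
  have hintT : IsIntegral T (algebraMap A B a) :=
    (Algebra.IsIntegral.isIntegral a).map (IsScalarTower.toAlgHom T A B)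
  have hint : IsIntegral F (algebraMap A B a) := hintT.tower_top
  exact isUnit_of_isIntegral_of_mem_nonZeroDivisors' hint hmem
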